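/- Let n be a positive integer. There does not exist a closed subset Σ ⊂ (ℝ^{n+1})^{2n+1} of Lebesgue measure zero such that for every p = (p₀,…,p_{2n}) ∈ (ℝ^{n+1})^{2n+1} − Σ and every (2n+1)×(n+1) matrix A with non-zero entries the following two properties both hold: (1) if the rank of A is n+1, then G_{(p,A)} is A-equivalent to the normal form of Whitney umbrella (x₀,x₁,…,xₙ) ↦ (x₀², x₀x₁, …, x₀xₙ, x₁, …, xₙ); and (2) if the rank of A is less than n+1, then G_{(p,A)} is A-equivalent to the inclusion (x₀,…,xₙ) ↦ (x₀,…,xₙ, 0, …, 0). -/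

import Mathlib

/-- A `C^∞` diffeomorphism of a normed space onto itself. -/
def IsSmoothDiffeo {E : Type*} [NormedAddCommGroup E] [NormedSpace ℝ E] (φ : E → E) : Prop :=
  ContDiff ℝ (⊤ : ℕ∞) φ ∧
    ∃ φi : E → E, ContDiff ℝ (⊤ : ℕ∞) φi ∧ (∀ x, φi (φ x) = x) ∧ (∀ y, φ (φi y) = y)

/-- `f` and `g` are `𝒜`-equivalent: `ψ ∘ f ∘ φ = g` for some `C^∞` diffeomorphisms
`φ` of the source and `ψ` of the target. -/
def AEquiv {E F : Type*} [NormedAddCommGroup E] [NormedSpace ℝ E]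
    [NormedAddCommGroup F] [NormedSpace ℝ F] (f g : E → F) : Prop :=
  ∃ (φ : E → E) (ψ : F → F), IsSmoothDiffeo φ ∧ IsSmoothDiffeo ψ ∧ ψ ∘ f ∘ φ = g

/-- The generalized distance-squared mapping
`G_{(p,A)} : ℝ^{n+1} → ℝ^{2n+1}` for `p = (p₀,…,p_{2n})`. -/
def genDistSqMap {n : ℕ} (p : Fin (2 * n + 1) → (Fin (n + 1) → ℝ))
    (A : Matrix (Fin (2 * n + 1)) (Fin (n + 1)) ℝ) (x : Fin (n + 1) → ℝ) :
    Fin (2 * n + 1) → ℝ :=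
  fun i => ∑ j, A i j * (x j - p i j) ^ 2

/-- The normal form of Whitney umbrella
`(x₀,…,xₙ) ↦ (x₀², x₀x₁, …, x₀xₙ, x₁, …, xₙ)`. -/
def whitneyUmbrella (n : ℕ) (x : Fin (n + 1) → ℝ) : Fin (2 * n + 1) → ℝ :=
  fun i =>
    if h : (i : ℕ) ≤ n then x 0 * x ⟨(i : ℕ), by omega⟩
    else x ⟨(i : ℕ) - n, by have := i.isLt; omega⟩

/-- The inclusion `(x₀,…,xₙ) ↦ (x₀,…,xₙ,0,…,0)` of `ℝ^{n+1}` into `ℝ^{2n+1}`. -/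
def inclusionMap (n : ℕ) (x : Fin (n + 1) → ℝ) : Fin (2 * n + 1) → ℝ :=
  fun i => if h : (i : ℕ) < n + 1 then x ⟨(i : ℕ), h⟩ else 0

/- ### Auxiliary lemmas -/

/-- Transfer of a triple point of `f` through an `𝒜`-equivalence. -/
lemma aequiv_fiber3 {E F : Type*} [NormedAddCommGroup E] [NormedSpace ℝ E]
    [NormedAddCommGroup F] [NormedSpace ℝ F] {f g : E → F} (h : AEquiv f g)
    {x y z : E} (hxy : x ≠ y) (hxz : x ≠ z) (hyz : y ≠ z)
    (e1 : f x = f y) (e2 : f x = f z) :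
    ∃ a b c : E, a ≠ b ∧ a ≠ c ∧ b ≠ c ∧ g a = g b ∧ g a = g c := by
  obtain ⟨φ, ψ, hφ, hψ, hc⟩ := h
  obtain ⟨-, φi, -, hli, hri⟩ := hφ
  have key : ∀ w, g (φi w) = ψ (f w) := by
    intro w; rw [← hc]; simp [Function.comp, hri w]
  have hinj : Function.Injective φi := by
    intro aa bb hh
    have := congrArg φ hh; rwa [hri, hri] at this
  exact ⟨φi x, φi y, φi z, fun hh => hxy (hinj hh), fun hh => hxz (hinj hh),
    fun hh => hyz (hinj hh), by rw [key, key, e1], by rw [key, key, e2]⟩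

/-- `𝒜`-equivalence preserves injectivity. -/
lemma aequiv_injective {E F : Type*} [NormedAddCommGroup E] [NormedSpace ℝ E]
    [NormedAddCommGroup F] [NormedSpace ℝ F] {f g : E → F} (h : AEquiv f g)
    (hf : Function.Injective f) : Function.Injective g := by
  obtain ⟨φ, ψ, hφ, hψ, hc⟩ := h
  obtain ⟨-, φi, -, hliφ, -⟩ := hφ
  obtain ⟨-, ψi, -, hliψ, -⟩ := hψ
  rw [← hc]
  exact (Function.LeftInverse.injective hliψ).comp
    (hf.comp (Function.LeftInverse.injective hliφ))

/-- `𝒜`-equivalence reflects injectivity. -/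
lemma aequiv_injective' {E F : Type*} [NormedAddCommGroup E] [NormedSpace ℝ E]
    [NormedAddCommGroup F] [NormedSpace ℝ F] {f g : E → F} (h : AEquiv f g)
    (hg : Function.Injective g) : Function.Injective f := by
  obtain ⟨φ, ψ, hφ, hψ, hc⟩ := h
  obtain ⟨-, φi, -, hli, hri⟩ := hφ
  have key : ∀ w, g (φi w) = ψ (f w) := by
    intro w; rw [← hc]; simp [Function.comp, hri w]
  intro x y hxy
  have : φi x = φi y := hg (by rw [key, key, hxy])
  have := congrArg φ this
  rwa [hri, hri] at this

/-- The inclusion is injective. -/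
lemma inclusion_inj (n : ℕ) : Function.Injective (inclusionMap n) := by
  intro u v h
  funext k
  have hk : (k : ℕ) < 2 * n + 1 := by have := k.isLt; omega
  have h' := congrFun h ⟨(k : ℕ), hk⟩
  simp only [inclusionMap] at h'
  rw [dif_pos (by simpa using k.isLt), dif_pos (by simpa using k.isLt)] at h'
  have hidx : (⟨((⟨(k : ℕ), hk⟩ : Fin (2 * n + 1)) : ℕ),
      by simpa using k.isLt⟩ : Fin (n + 1)) = k := Fin.ext (by simp)
  rwa [hidx] at h'

lemma umbrella_tail {n : ℕ} {u v : Fin (n + 1) → ℝ}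
    (huv : whitneyUmbrella n u = whitneyUmbrella n v) (k : Fin (n + 1)) (hk : k ≠ 0) :
    u k = v k := by
  have hkne : (k : ℕ) ≠ 0 := by
    intro h; exact hk (Fin.ext (by simp [h]))
  have hi : n + (k : ℕ) < 2 * n + 1 := by have := k.isLt; omega
  have h := congrFun huv ⟨n + (k : ℕ), hi⟩
  simp only [whitneyUmbrella] at h
  rw [dif_neg (by simp; omega), dif_neg (by simp; omega)] at h
  have hidx : (⟨((⟨n + (k : ℕ), hi⟩ : Fin (2 * n + 1)) : ℕ) - n,
      by simp only [Fin.val_mk]; omega⟩ : Fin (n + 1)) = k := Fin.ext (by simp)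
  rwa [hidx] at h

lemma umbrella_head {n : ℕ} {u v : Fin (n + 1) → ℝ}
    (huv : whitneyUmbrella n u = whitneyUmbrella n v) :
    u 0 * u 0 = v 0 * v 0 := by
  have h := congrFun huv 0
  simp only [whitneyUmbrella] at h
  rw [dif_pos (by simp), dif_pos (by simp)] at h
  have hidx : (⟨(((0 : Fin (2 * n + 1))) : ℕ), by simp⟩ : Fin (n + 1)) = 0 := Fin.ext (by simp)
  rwa [hidx] at h

lemma umbrella_ext {n : ℕ} {u v : Fin (n + 1) → ℝ}
    (huv : whitneyUmbrella n u = whitneyUmbrella n v) (h0 : u 0 = v 0) : u = v := by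
  funext k
  by_cases hk : k = 0
  · subst hk; exact h0
  · exact umbrella_tail huv k hk

/-- Every fiber of the Whitney umbrella has at most two points. -/
lemma umbrella_fib {n : ℕ} {a b c : Fin (n + 1) → ℝ}
    (hab : whitneyUmbrella n a = whitneyUmbrella n b)
    (hac : whitneyUmbrella n a = whitneyUmbrella n c)
    (h1 : a ≠ b) (h2 : a ≠ c) (h3 : b ≠ c) : False := by
  have hab0 : a 0 ≠ b 0 := fun h => h1 (umbrella_ext hab h)
  have hac0 : a 0 ≠ c 0 := fun h => h2 (umbrella_ext hac h)
  have sq1 := umbrella_head hab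
  have sq2 := umbrella_head hac
  have e1 : a 0 = -b 0 := by
    rcases mul_self_eq_mul_self_iff.mp sq1 with h | h
    · exact absurd h hab0
    · exact h
  have e2 : a 0 = -c 0 := by
    rcases mul_self_eq_mul_self_iff.mp sq2 with h | h
    · exact absurd h hac0
    · exact h
  have hbc : b 0 = c 0 := by linarith
  exact h3 (umbrella_ext (hab.symm.trans hac) hbc)

/-- The Whitney umbrella is not injective. -/
lemma umbrella_pair (n : ℕ) :
    ∃ a b : Fin (n + 1) → ℝ, a ≠ b ∧ whitneyUmbrella n a = whitneyUmbrella n b := by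
  refine ⟨(fun j => if j = 0 then 1 else 0), (fun j => if j = 0 then -1 else 0), ?_, ?_⟩
  · intro h
    have := congrFun h 0
    norm_num at this
  · funext i
    simp only [whitneyUmbrella]
    by_cases hi : (i : ℕ) ≤ n
    · rw [dif_pos hi, dif_pos hi]
      by_cases hz : (⟨(i : ℕ), by omega⟩ : Fin (n + 1)) = 0
      · rw [hz]; norm_num
      · rw [if_neg hz, if_neg hz]; ring
    · rw [dif_neg hi, dif_neg hi]
      have : (⟨(i : ℕ) - n, by have := i.isLt; omega⟩ : Fin (n + 1)) ≠ 0 := by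
        intro h
        have := congrArg Fin.val h
        simp at this
        omega
      rw [if_neg this, if_neg this]

/- ### Main theorem -/

/-- there is no universal closed Lebesgue-null set `Z ⊂ (ℝ^{n+1})^{2n+1}`
such that for every `p` outside `Z` and every `(2n+1)×(n+1)` matrix `A` with non-zero
entries, `G_{(p,A)}` is `𝒜`-equivalent to the normal form of Whitney umbrella whenever
`rank A = n+1`, and to the inclusion whenever `rank A < n+1`. -/
theorem no_universal_bad_set (n : ℕ) (hn : 1 ≤ n) :
    ¬ ∃ Z : Set (Fin (2 * n + 1) → (Fin (n + 1) → ℝ)),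
        IsClosed Z ∧ MeasureTheory.volume Z = 0 ∧
        ∀ p ∉ Z, ∀ A : Matrix (Fin (2 * n + 1)) (Fin (n + 1)) ℝ, (∀ i j, A i j ≠ 0) →
          (A.rank = n + 1 → AEquiv (genDistSqMap p A) (whitneyUmbrella n)) ∧
          (A.rank < n + 1 → AEquiv (genDistSqMap p A) (inclusionMap n)) := by
  rintro ⟨Z, hZclosed, hZ0, hZ⟩
  -- pick a point outside `Z`
  have hne : Z ≠ Set.univ := by
    intro h
    rw [h] at hZ0
    exact (isOpen_univ.measure_ne_zero MeasureTheory.volume Set.univ_nonempty) hZ0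
  obtain ⟨p, hp⟩ := (Set.ne_univ_iff_exists_notMem Z).mp hne
  rcases eq_or_lt_of_le hn with hn1 | hn2
  · -- the case n = 1
    subst hn1
    by_cases hcol : (p 1 0 - p 0 0) * (p 2 1 - p 0 1) - (p 2 0 - p 0 0) * (p 1 1 - p 0 1) = 0
    · -- the three centers are collinear: an all-ones (rank-one) matrix gives a
      -- non-injective map, contradicting `𝒜`-equivalence to the inclusion
      obtain ⟨w0, w1, hw, e1, e2⟩ :
          ∃ w0 w1 : ℝ, ¬(w0 = 0 ∧ w1 = 0) ∧
            w0 * (p 1 0 - p 0 0) + w1 * (p 1 1 - p 0 1) = 0 ∧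
            w0 * (p 2 0 - p 0 0) + w1 * (p 2 1 - p 0 1) = 0 := by
        by_cases h1 : p 1 0 = p 0 0 ∧ p 1 1 = p 0 1
        · by_cases h2 : p 2 0 = p 0 0 ∧ p 2 1 = p 0 1
          · exact ⟨1, 0, by simp, by rw [h1.1, h1.2]; ring, by rw [h2.1, h2.2]; ring⟩
          · refine ⟨p 0 1 - p 2 1, p 2 0 - p 0 0, ?_, by rw [h1.1, h1.2]; ring, by ring⟩
            rintro ⟨ha, hb⟩
            exact h2 ⟨by linarith, by linarith⟩
        · refine ⟨p 0 1 - p 1 1, p 1 0 - p 0 0, ?_, by ring, by linear_combination hcol⟩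
          rintro ⟨ha, hb⟩
          exact h1 ⟨by linarith, by linarith⟩
      have key : ∀ i : Fin (2 * 1 + 1), w0 * (p i 0 - p 0 0) + w1 * (p i 1 - p 0 1) = 0 := by
        intro i
        fin_cases i
        · show w0 * (p 0 0 - p 0 0) + w1 * (p 0 1 - p 0 1) = 0
          ring
        · show w0 * (p 1 0 - p 0 0) + w1 * (p 1 1 - p 0 1) = 0
          exact e1
        · show w0 * (p 2 0 - p 0 0) + w1 * (p 2 1 - p 0 1) = 0
          exact e2
      set A : Matrix (Fin (2 * 1 + 1)) (Fin (1 + 1)) ℝ := fun _ _ => (1 : ℝ) with hA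
      have hA' : ∀ i j, A i j ≠ 0 := fun i j => one_ne_zero
      -- rank A ≤ 1
      have hrank : Matrix.rank A < 1 + 1 := by
        have hle : LinearMap.range (Matrix.mulVecLin A) ≤
            Submodule.span ℝ {(fun _ => 1 : Fin (2 * 1 + 1) → ℝ)} := by
          rintro v ⟨u, rfl⟩
          apply Submodule.mem_span_singleton.mpr
          refine ⟨u 0 + u 1, ?_⟩
          funext i
          rw [Matrix.mulVecLin_apply]
          simp [Matrix.mulVecLin_apply, Matrix.mulVec, dotProduct, Fin.sum_univ_succ, hA]
        have h1 : Module.finrank ℝ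
            (Submodule.span ℝ {(fun _ => 1 : Fin (2 * 1 + 1) → ℝ)}) = 1 :=
          finrank_span_singleton (by
            intro h
            have := congrFun h 0
            norm_num at this)
        have : Matrix.rank A ≤ 1 := by
          rw [Matrix.rank]
          calc Module.finrank ℝ (LinearMap.range (Matrix.mulVecLin A))
              ≤ Module.finrank ℝ (Submodule.span ℝ {(fun _ => 1 : Fin (2 * 1 + 1) → ℝ)}) :=
                Submodule.finrank_mono hle
            _ = 1 := h1
        omega
      have hcl := (hZ p hp A hA').2 hrank
      -- non-injectivity of the map
      have hxy : (![p 0 0 + w0 / 2, p 0 1 + w1 / 2] : Fin (1 + 1) → ℝ) ≠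
          ![p 0 0 - w0 / 2, p 0 1 - w1 / 2] := by
        intro h
        have h0 := congrFun h 0
        have h1 := congrFun h 1
        simp only [Matrix.cons_val_zero, Matrix.cons_val_one, Matrix.head_cons] at h0 h1
        exact hw ⟨by linarith, by linarith⟩
      have hGeq : genDistSqMap p A ![p 0 0 + w0 / 2, p 0 1 + w1 / 2] =
          genDistSqMap p A ![p 0 0 - w0 / 2, p 0 1 - w1 / 2] := by
        funext i
        simp only [genDistSqMap, hA, Fin.sum_univ_succ, Fin.sum_univ_zero,
          Fin.succ_zero_eq_one, Matrix.cons_val_zero, Matrix.cons_val_one, Matrix.head_cons,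
          one_mul, add_zero]
        linear_combination (-2 : ℝ) * key i
      exact hxy (aequiv_injective' hcl (inclusion_inj 1) hGeq)
    · -- the three centers are not collinear: a suitable full-rank matrix gives an
      -- injective map, contradicting `𝒜`-equivalence to the Whitney umbrella
      obtain ⟨r, hr0, hr1, hr2, hDr⟩ :
          ∃ r : ℝ, p 0 0 + r ≠ 0 ∧ p 1 0 + r ≠ 0 ∧ p 2 0 + r ≠ 0 ∧
            (p 1 0 - p 2 0) * (p 0 0 * p 0 1) + (p 2 0 - p 0 0) * (p 1 0 * p 1 1)
              + (p 0 0 - p 1 0) * (p 2 0 * p 2 1)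
              - r * ((p 1 0 - p 0 0) * (p 2 1 - p 0 1)
                - (p 2 0 - p 0 0) * (p 1 1 - p 0 1)) ≠ 0 := by
        refine ⟨1 + max (max (-(p 0 0)) (-(p 1 0))) (max (-(p 2 0))
          (((p 1 0 - p 2 0) * (p 0 0 * p 0 1) + (p 2 0 - p 0 0) * (p 1 0 * p 1 1)
            + (p 0 0 - p 1 0) * (p 2 0 * p 2 1)) /
            ((p 1 0 - p 0 0) * (p 2 1 - p 0 1) - (p 2 0 - p 0 0) * (p 1 1 - p 0 1)))),
          ?_, ?_, ?_, ?_⟩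
        · have h1 := le_max_of_le_left (le_max_left (-(p 0 0)) (-(p 1 0)))
            (c := max (-(p 2 0))
              (((p 1 0 - p 2 0) * (p 0 0 * p 0 1) + (p 2 0 - p 0 0) * (p 1 0 * p 1 1)
                + (p 0 0 - p 1 0) * (p 2 0 * p 2 1)) /
                ((p 1 0 - p 0 0) * (p 2 1 - p 0 1) - (p 2 0 - p 0 0) * (p 1 1 - p 0 1))))
          intro h; linarith
        · have h1 := le_max_of_le_left (le_max_right (-(p 0 0)) (-(p 1 0)))
            (c := max (-(p 2 0))
              (((p 1 0 - p 2 0) * (p 0 0 * p 0 1) + (p 2 0 - p 0 0) * (p 1 0 * p 1 1)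
                + (p 0 0 - p 1 0) * (p 2 0 * p 2 1)) /
                ((p 1 0 - p 0 0) * (p 2 1 - p 0 1) - (p 2 0 - p 0 0) * (p 1 1 - p 0 1))))
          intro h; linarith
        · have h1 := le_max_of_le_right (le_max_left (-(p 2 0))
            (((p 1 0 - p 2 0) * (p 0 0 * p 0 1) + (p 2 0 - p 0 0) * (p 1 0 * p 1 1)
              + (p 0 0 - p 1 0) * (p 2 0 * p 2 1)) /
              ((p 1 0 - p 0 0) * (p 2 1 - p 0 1) - (p 2 0 - p 0 0) * (p 1 1 - p 0 1))))
            (b := max (-(p 0 0)) (-(p 1 0)))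
          intro h; linarith
        · have h1 := le_max_of_le_right (le_max_right (-(p 2 0))
            (((p 1 0 - p 2 0) * (p 0 0 * p 0 1) + (p 2 0 - p 0 0) * (p 1 0 * p 1 1)
              + (p 0 0 - p 1 0) * (p 2 0 * p 2 1)) /
              ((p 1 0 - p 0 0) * (p 2 1 - p 0 1) - (p 2 0 - p 0 0) * (p 1 1 - p 0 1))))
            (b := max (-(p 0 0)) (-(p 1 0)))
          intro h
          have h2 : (1 + max (max (-(p 0 0)) (-(p 1 0))) (max (-(p 2 0))
              (((p 1 0 - p 2 0) * (p 0 0 * p 0 1) + (p 2 0 - p 0 0) * (p 1 0 * p 1 1)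
                + (p 0 0 - p 1 0) * (p 2 0 * p 2 1)) /
                ((p 1 0 - p 0 0) * (p 2 1 - p 0 1) - (p 2 0 - p 0 0) * (p 1 1 - p 0 1)))))
              = ((p 1 0 - p 2 0) * (p 0 0 * p 0 1) + (p 2 0 - p 0 0) * (p 1 0 * p 1 1)
                + (p 0 0 - p 1 0) * (p 2 0 * p 2 1)) /
                ((p 1 0 - p 0 0) * (p 2 1 - p 0 1) - (p 2 0 - p 0 0) * (p 1 1 - p 0 1)) :=
            (eq_div_iff hcol).mpr (by linarith)
          linarith
      set A : Matrix (Fin (2 * 1 + 1)) (Fin (1 + 1)) ℝ :=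
        fun i => ![(1 : ℝ), p i 0 + r] with hA
      have hA' : ∀ i j, A i j ≠ 0 := by
        intro i j
        fin_cases j
        · show (1 : ℝ) ≠ 0; norm_num
        · show p i 0 + r ≠ 0
          fin_cases i
          · exact hr0
          · exact hr1
          · exact hr2
      have hrank : Matrix.rank A = 1 + 1 := by
        have hinj : Function.Injective (Matrix.mulVecLin A) := by
          rw [← LinearMap.ker_eq_bot]
          rw [Submodule.eq_bot_iff]
          intro v hv
          rw [LinearMap.mem_ker] at hv
          have h' : ∀ i : Fin (2 * 1 + 1), v 0 + (p i 0 + r) * v 1 = 0 := by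
            intro i
            have := congrFun hv i
            rw [Matrix.mulVecLin_apply] at this
            simpa [hA, Matrix.mulVecLin_apply, Matrix.mulVec, dotProduct,
              Fin.sum_univ_succ] using this
          have h0 := h' 0
          have h1 := h' 1
          have h2 := h' 2
          have hv1 : v 1 = 0 := by
            by_cases hP01 : p 0 0 = p 1 0
            · by_cases hP02 : p 0 0 = p 2 0
              · exact absurd (by linear_combination (-(p 2 1 - p 0 1)) * hP01
                  + (p 1 1 - p 0 1) * hP02) hcol
              · rcases mul_eq_zero.mp (show (p 0 0 - p 2 0) * v 1 = 0 by
                  linear_combination h0 - h2) with h | h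
                · exact absurd (by linarith) hP02
                · exact h
            · rcases mul_eq_zero.mp (show (p 0 0 - p 1 0) * v 1 = 0 by
                linear_combination h0 - h1) with h | h
              · exact absurd (by linarith) hP01
              · exact h
          have hv0 : v 0 = 0 := by
            rw [hv1] at h0; linarith
          funext j
          fin_cases j
          · exact hv0
          · exact hv1
        rw [Matrix.rank]
        rw [LinearMap.finrank_range_of_inj hinj]
        simp
      have hGinj : Function.Injective (genDistSqMap p A) := by
        intro x y hxy
        have E : ∀ i : Fin (2 * 1 + 1),
            (x 0 - p i 0) ^ 2 + (p i 0 + r) * (x 1 - p i 1) ^ 2 =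
            (y 0 - p i 0) ^ 2 + (p i 0 + r) * (y 1 - p i 1) ^ 2 := by
          intro i
          have := congrFun hxy i
          simpa [hA, genDistSqMap, Fin.sum_univ_succ, Fin.succ_zero_eq_one] using this
        have E0 := E 0
        have E1 := E 1
        have E2 := E 2
        have hy1 : x 1 = y 1 := by
          have hkey : (x 1 - y 1) * ((p 1 0 - p 2 0) * (p 0 0 * p 0 1)
              + (p 2 0 - p 0 0) * (p 1 0 * p 1 1)
              + (p 0 0 - p 1 0) * (p 2 0 * p 2 1)
              - r * ((p 1 0 - p 0 0) * (p 2 1 - p 0 1)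
                - (p 2 0 - p 0 0) * (p 1 1 - p 0 1))) = 0 := by
            linear_combination (-(p 1 0 - p 2 0) / 2) * E0 + (-(p 2 0 - p 0 0) / 2) * E1
              + (-(p 0 0 - p 1 0) / 2) * E2
          rcases mul_eq_zero.mp hkey with h | h
          · linarith
          · exact absurd h hDr
        have f0 : (x 0 - p 0 0) ^ 2 = (y 0 - p 0 0) ^ 2 := by
          linear_combination E0 - (p 0 0 + r) * (x 1 + y 1 - 2 * p 0 1) * hy1
        have f1 : (x 0 - p 1 0) ^ 2 = (y 0 - p 1 0) ^ 2 := by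
          linear_combination E1 - (p 1 0 + r) * (x 1 + y 1 - 2 * p 1 1) * hy1
        have f2 : (x 0 - p 2 0) ^ 2 = (y 0 - p 2 0) ^ 2 := by
          linear_combination E2 - (p 2 0 + r) * (x 1 + y 1 - 2 * p 2 1) * hy1
        by_cases hx0 : x 0 = y 0
        · funext j
          fin_cases j
          · exact hx0
          · exact hy1
        · exfalso
          have h01 : p 1 0 = p 0 0 := by
            rcases mul_eq_zero.mp (show (x 0 - y 0) * (2 * p 1 0 - 2 * p 0 0) = 0 by
              linear_combination f0 - f1) with h | h
            · exact absurd (by linarith) hx0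
            · linarith
          have h02 : p 2 0 = p 0 0 := by
            rcases mul_eq_zero.mp (show (x 0 - y 0) * (2 * p 2 0 - 2 * p 0 0) = 0 by
              linear_combination f0 - f2) with h | h
            · exact absurd (by linarith) hx0
            · linarith
          exact hcol (by linear_combination (p 2 1 - p 0 1) * h01 - (p 1 1 - p 0 1) * h02)
      have hcl := (hZ p hp A hA').1 hrank
      obtain ⟨a, b, hab, he⟩ := umbrella_pair 1
      exact hab (aequiv_injective hcl hGinj he)
  · -- the case n ≥ 2: the reciprocal matrix produces a triple point
    obtain ⟨c, hc⟩ : ∃ c : ℝ, ∀ i j, 2 * c + 1 - 2 * p i j ≠ 0 := by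
      have hfin : (Set.range fun ij : Fin (2 * n + 1) × Fin (n + 1) =>
          (2 * p ij.1 ij.2 - 1) / 2).Finite := Set.finite_range _
      obtain ⟨c, hc⟩ := hfin.infinite_compl.nonempty
      refine ⟨c, fun i j h => hc ?_⟩
      exact ⟨(i, j), by linarith⟩
    set A : Matrix (Fin (2 * n + 1)) (Fin (n + 1)) ℝ :=
      fun i j => (2 * c + 1 - 2 * p i j)⁻¹ with hA
    have hA' : ∀ i j, A i j ≠ 0 := fun i j => inv_ne_zero (hc i j)
    have key : ∀ ju jv : Fin (n + 1), ju ≠ jv →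
        genDistSqMap p A (fun j => if j = ju then c + 1 else c) =
        genDistSqMap p A (fun j => if j = jv then c + 1 else c) := by
      intro ju jv hnejj
      funext i
      have hsplit : ∑ j, (A i j * ((if j = ju then c + 1 else c) - p i j) ^ 2
          - A i j * ((if j = jv then c + 1 else c) - p i j) ^ 2) = 0 := by
        rw [← Finset.sum_subset (Finset.subset_univ ({ju, jv} : Finset (Fin (n + 1))))]
        · rw [Finset.sum_pair hnejj]
          rw [if_pos rfl, if_neg hnejj, if_neg (Ne.symm hnejj), if_pos rfl]
          have e1 : A i ju * (c + 1 - p i ju) ^ 2 - A i ju * (c - p i ju) ^ 2 = 1 := by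
            rw [← mul_sub]
            have : (c + 1 - p i ju) ^ 2 - (c - p i ju) ^ 2 = 2 * c + 1 - 2 * p i ju := by
              ring
            rw [this, hA]
            exact inv_mul_cancel₀ (hc i ju)
          have e2 : A i jv * (c - p i jv) ^ 2 - A i jv * (c + 1 - p i jv) ^ 2 = -1 := by
            rw [← mul_sub]
            have : (c - p i jv) ^ 2 - (c + 1 - p i jv) ^ 2 = -(2 * c + 1 - 2 * p i jv) := by
              ring
            rw [this, hA, mul_neg]
            rw [inv_mul_cancel₀ (hc i jv)]
          linarith [e1, e2]
        · intro x _ hx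
          simp only [Finset.mem_insert, Finset.mem_singleton] at hx
          push_neg at hx
          rw [if_neg hx.1, if_neg hx.2]
          ring
      rw [Finset.sum_sub_distrib] at hsplit
      have := sub_eq_zero.mp hsplit
      simpa [genDistSqMap] using this
    have hne01 : (⟨0, by omega⟩ : Fin (n + 1)) ≠ ⟨1, by omega⟩ := by
      rw [Fin.ne_iff_vne]; simp
    have hne02 : (⟨0, by omega⟩ : Fin (n + 1)) ≠ ⟨2, by omega⟩ := by
      rw [Fin.ne_iff_vne]; simp
    have hne12 : (⟨1, by omega⟩ : Fin (n + 1)) ≠ ⟨2, by omega⟩ := by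
      rw [Fin.ne_iff_vne]; simp
    have hpt : ∀ ju jv : Fin (n + 1), ju ≠ jv →
        (fun j => if j = ju then c + 1 else c) ≠ (fun j => if j = jv then c + 1 else c) := by
      intro ju jv hnejj h
      have := congrFun h ju
      rw [if_pos rfl, if_neg hnejj] at this
      linarith
    have hArank : Matrix.rank A ≤ n + 1 :=
      le_trans (Matrix.rank_le_card_width A) (by simp)
    rcases lt_or_eq_of_le hArank with hlt | heq
    · have hcl := (hZ p hp A hA').2 hlt
      obtain ⟨a, b, c', hab, hac, hbc, f1, f2⟩ := aequiv_fiber3 hcl (hpt _ _ hne01)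
        (hpt _ _ hne02) (hpt _ _ hne12) (key _ _ hne01) (key _ _ hne02)
      exact hab (inclusion_inj n f1)
    · have hcl := (hZ p hp A hA').1 heq
      obtain ⟨a, b, c', hab, hac, hbc, f1, f2⟩ := aequiv_fiber3 hcl (hpt _ _ hne01)
        (hpt _ _ hne02) (hpt _ _ hne12) (key _ _ hne01) (key _ _ hne02)
      exact umbrella_fib f1 f2 hab hac hbc
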